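/- Convergence rate of the projected recursive Newton method with exact data (Theorem 2.1, explicit form): let X and Y be real Hilbert spaces, N ≥ 1 and J ≥ 1 integers, Δk > 0 and k_n := k_l + nΔk for n = 0,…,N. Let X₀ ⊆ X₁ ⊆ … ⊆ X_N be closed subspaces of X with orthogonal projections P_n. Let F : X × ℝ → Y be twice continuously Fréchet differentiable with ‖∂_rF(r,k)‖ ≤ d₁, ‖∂_kF(r,k)‖ ≤ d₂, ‖∂²_{rr}F(r,k)‖ ≤ d₃ and ‖∂²_{kr}F(r,k)‖ ≤ d₄ for all (r,k). Suppose r̃₀, …, r̃_N ∈ X satisfy r̃_n ∈ X_n, F(r̃_n, k_n) = 0, and ‖r̃_{n+1} − r̃_n‖ ≤ d₀Δk for a constant d₀ ≥ 1, and suppose σ > 0 satisfies ‖∂_rF(r̃_n, k_n)x‖ ≥ σ‖x‖ for all x ∈ X and all n. Fix ε with 0 < ε < 3/(2 + d₀) and α > 0 with α ≤ εσ²/(3 − ε); set c₀ := 4ε/(3 d₃ (9 d₁ + √α)), q := ε(1 + d₀)/3 and b := ε(2 + d₀)/3, and assume the step-size conditions (9d₁d₄/(4α))Δk ≤ ε/3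 and Δk(1 + d₂/(2d₀√α)) ≤ (1 − b)c₀α. Define the iterates by r⁰_{n+1} := r_n, r^{j+1}_{n+1} := r^j_{n+1} − P_{n+1} R_α(∂_rF(r^j_{n+1}, k_{n+1})) F(r^j_{n+1}, k_{n+1}) for j = 0,…,J−1, and r_{n+1} := r^J_{n+1}, starting from a given r₀ ∈ X₀. If ‖r̃₀ − r₀‖ ≤ d₀c₀α, then ‖r̃_n − r_n‖ ≤ d₀c₀α for every n = 0,…,N, and the final error satisfies ‖r̃_N − r_N‖ ≤ q^{J−1} · Δk (d₀ + d₂/(2√α)) / (1 − q^{J−1}b) + (q^{J−1}b)^N · d₀c₀α. -/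

import Mathlib

set_option maxHeartbeats 1600000

open ContinuousLinearMap in
lemma aux_apply_inv {X Y : Type*}
    [NormedAddCommGroup X] [InnerProductSpace ℝ X] [CompleteSpace X]
    [NormedAddCommGroup Y] [InnerProductSpace ℝ Y] [CompleteSpace Y]
    (α : ℝ) (A : X →L[ℝ] Y) (B : X →L[ℝ] X)
    (hB : (α • (1 : X →L[ℝ] X) + adjoint A ∘L A) ∘L B = 1) (y : X) :
    α • B y + adjoint A (A (B y)) = y := by
  have h := congrArg (fun T : X →L[ℝ] X => T y) hB
  simpa only [comp_apply, add_apply, smul_apply, ContinuousLinearMap.one_apply] using h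

open ContinuousLinearMap in
lemma aux_inv_id {X Y : Type*}
    [NormedAddCommGroup X] [InnerProductSpace ℝ X] [CompleteSpace X]
    [NormedAddCommGroup Y] [InnerProductSpace ℝ Y] [CompleteSpace Y]
    (α : ℝ) (A : X →L[ℝ] Y) (B : X →L[ℝ] X)
    (hB : B ∘L (α • (1 : X →L[ℝ] X) + adjoint A ∘L A) = 1) (v : X) :
    B (adjoint A (A v)) = v - α • B v := by
  have h := congrArg (fun T : X →L[ℝ] X => T v) hB
  simp only [comp_apply, add_apply, smul_apply, one_apply, map_add, map_smul] at h
  rw [eq_sub_iff_add_eq, add_comm]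
  exact h

open ContinuousLinearMap in
lemma aux_energy {X Y : Type*}
    [NormedAddCommGroup X] [InnerProductSpace ℝ X] [CompleteSpace X]
    [NormedAddCommGroup Y] [InnerProductSpace ℝ Y] [CompleteSpace Y]
    (α : ℝ) (A : X →L[ℝ] Y) (B : X →L[ℝ] X)
    (hB : (α • (1 : X →L[ℝ] X) + adjoint A ∘L A) ∘L B = 1) (y : X) :
    α * ‖B y‖ ^ 2 + ‖A (B y)‖ ^ 2 = inner ℝ y (B y) := by
  set x := B y with hx
  have h := aux_apply_inv α A B hB y
  have h2 := congrArg (fun z => (inner ℝ z x : ℝ)) h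
  simp only [inner_add_left, real_inner_smul_left, adjoint_inner_left] at h2
  rw [real_inner_self_eq_norm_sq] at h2
  rw [← h2, real_inner_self_eq_norm_sq]

open ContinuousLinearMap in
lemma aux_Ralpha {X Y : Type*}
    [NormedAddCommGroup X] [InnerProductSpace ℝ X] [CompleteSpace X]
    [NormedAddCommGroup Y] [InnerProductSpace ℝ Y] [CompleteSpace Y]
    (α : ℝ) (hα : 0 < α) (A : X →L[ℝ] Y) (B : X →L[ℝ] X)
    (hB : (α • (1 : X →L[ℝ] X) + adjoint A ∘L A) ∘L B = 1) (y : Y) :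
    ‖B (adjoint A y)‖ ≤ ‖y‖ / (2 * Real.sqrt α) := by
  set x := B (adjoint A y) with hx
  have h1 : α * ‖x‖ ^ 2 + ‖A x‖ ^ 2 = inner ℝ y (A x) := by
    rw [aux_energy α A B hB (adjoint A y), adjoint_inner_left]
  have h2 : (inner ℝ y (A x) : ℝ) ≤ ‖y‖ * ‖A x‖ := real_inner_le_norm y (A x)
  have h3 : α * ‖x‖ ^ 2 ≤ ‖y‖ ^ 2 / 4 := by nlinarith [sq_nonneg (‖A x‖ - ‖y‖/2)]
  have h4 : ‖x‖ ^ 2 ≤ (‖y‖ / (2 * Real.sqrt α)) ^ 2 := by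
    have hs : Real.sqrt α > 0 := Real.sqrt_pos.mpr hα
    have : (‖y‖ / (2 * Real.sqrt α)) ^ 2 = ‖y‖ ^ 2 / (4 * α) := by
      rw [div_pow]; rw [mul_pow]; rw [Real.sq_sqrt hα.le]; norm_num
    rw [this]
    rw [le_div_iff₀ (by linarith)]
    nlinarith
  have h5 : 0 ≤ ‖y‖ / (2 * Real.sqrt α) := by
    positivity
  nlinarith [norm_nonneg x]

open ContinuousLinearMap in
lemma aux_Balpha {X Y : Type*}
    [NormedAddCommGroup X] [InnerProductSpace ℝ X] [CompleteSpace X]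
    [NormedAddCommGroup Y] [InnerProductSpace ℝ Y] [CompleteSpace Y]
    (α : ℝ) (A : X →L[ℝ] Y) (B : X →L[ℝ] X)
    (hB : (α • (1 : X →L[ℝ] X) + adjoint A ∘L A) ∘L B = 1)
    (m : ℝ) (hm : 0 < m)
    (hlow : ∀ v : X, m * ‖v‖ ^ 2 ≤ α * ‖v‖ ^ 2 + ‖A v‖ ^ 2) (y : X) :
    ‖B y‖ ≤ ‖y‖ / m := by
  set x := B y with hx
  have h1 := aux_energy α A B hB y
  have h2 : (inner ℝ y x : ℝ) ≤ ‖y‖ * ‖x‖ := real_inner_le_norm y x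
  have h3 : m * ‖x‖ ^ 2 ≤ ‖y‖ * ‖x‖ := by
    calc m * ‖x‖ ^ 2 ≤ α * ‖x‖ ^ 2 + ‖A x‖ ^ 2 := hlow x
    _ = inner ℝ y x := h1
    _ ≤ ‖y‖ * ‖x‖ := h2
  rcases eq_or_lt_of_le (norm_nonneg x) with h0 | h0
  · rw [← h0]; positivity
  · rw [le_div_iff₀ hm]; nlinarith

lemma aux_proj_fix {X : Type*} [NormedAddCommGroup X] [InnerProductSpace ℝ X]
    (K : Submodule ℝ X) (x : X) (Px : X) (h1 : Px ∈ K) (h2 : x - Px ∈ Kᗮ)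
    (hx : x ∈ K) : Px = x := by
  have hv : x - Px ∈ K := K.sub_mem hx h1
  have : (inner ℝ (x - Px) (x - Px) : ℝ) = 0 := (Submodule.mem_orthogonal K (x - Px)).mp h2 _ hv
  have : x - Px = 0 := by rwa [inner_self_eq_zero] at this
  exact (sub_eq_zero.mp this).symm

lemma aux_proj_norm {X : Type*} [NormedAddCommGroup X] [InnerProductSpace ℝ X]
    (K : Submodule ℝ X) (x Px : X) (h1 : Px ∈ K) (h2 : x - Px ∈ Kᗮ) :
    ‖Px‖ ≤ ‖x‖ := by
  have horth : (inner ℝ Px (x - Px) : ℝ) = 0 :=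
    (Submodule.mem_orthogonal K (x - Px)).mp h2 _ h1
  have hx : x = Px + (x - Px) := by abel
  have : ‖x‖ ^ 2 = ‖Px‖ ^ 2 + ‖x - Px‖ ^ 2 := by
    calc ‖x‖ ^ 2 = ‖Px + (x - Px)‖ ^ 2 := by rw [← hx]
    _ = ‖Px‖ ^ 2 + 2 * inner ℝ Px (x - Px) + ‖x - Px‖ ^ 2 := norm_add_sq_real _ _
    _ = ‖Px‖ ^ 2 + ‖x - Px‖ ^ 2 := by rw [horth]; ring
  nlinarith [norm_nonneg x, norm_nonneg Px, sq_nonneg ‖x - Px‖]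

lemma aux_lip_fderiv {E F : Type*} [NormedAddCommGroup E] [NormedSpace ℝ E]
    [NormedAddCommGroup F] [NormedSpace ℝ F]
    (f : E → F) (hf : Differentiable ℝ f) (C : ℝ)
    (hC : ∀ x, ‖fderiv ℝ f x‖ ≤ C) (a b : E) :
    ‖f b - f a‖ ≤ C * ‖b - a‖ :=
  Convex.norm_image_sub_le_of_norm_fderiv_le (fun x _ => (hf x))
    (fun x _ => hC x) convex_univ (Set.mem_univ a) (Set.mem_univ b)

lemma aux_lip_deriv {F : Type*} [NormedAddCommGroup F] [NormedSpace ℝ F]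
    (f : ℝ → F) (hf : Differentiable ℝ f) (C : ℝ)
    (hC : ∀ x, ‖deriv f x‖ ≤ C) (a b : ℝ) :
    ‖f b - f a‖ ≤ C * |b - a| := by
  have := Convex.norm_image_sub_le_of_norm_deriv_le (fun x _ => (hf x))
    (fun x _ => hC x) convex_univ (Set.mem_univ a) (Set.mem_univ b)
  simpa using this

lemma aux_taylor {E F : Type*} [NormedAddCommGroup E] [NormedSpace ℝ E]
    [NormedAddCommGroup F] [NormedSpace ℝ F]
    (f : E → F) (hf : Differentiable ℝ f) (L : ℝ) (hL : 0 ≤ L)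
    (hlip : ∀ x y : E, ‖fderiv ℝ f x - fderiv ℝ f y‖ ≤ L * ‖x - y‖) (a b : E) :
    ‖f b - f a - fderiv ℝ f a (b - a)‖ ≤ L * ‖b - a‖ ^ 2 := by
  set g : E → F := fun x => f x - fderiv ℝ f a x with hg
  have hgd : Differentiable ℝ g := hf.sub (fderiv ℝ f a).differentiable
  have hgderiv : ∀ x : E, fderiv ℝ g x = fderiv ℝ f x - fderiv ℝ f a := by
    intro x
    rw [hg]
    rw [fderiv_fun_sub (hf x) (fderiv ℝ f a).differentiable.differentiableAt]
    rw [(fderiv ℝ f a).fderiv]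
  have key : ‖g b - g a‖ ≤ (L * ‖b - a‖) * ‖b - a‖ := by
    apply Convex.norm_image_sub_le_of_norm_fderiv_le
      (fun x _ => hgd x) (fun x hx => ?_) (convex_segment a b)
      (left_mem_segment ℝ a b) (right_mem_segment ℝ a b)
    rw [hgderiv x]
    calc ‖fderiv ℝ f x - fderiv ℝ f a‖ ≤ L * ‖x - a‖ := hlip x a
    _ ≤ L * ‖b - a‖ := by
        apply mul_le_mul_of_nonneg_left _ hL
        have h := dist_add_dist_of_mem_segment hx
        have h2 : dist a x ≤ dist a b := by
          have : 0 ≤ dist x b := dist_nonneg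
          linarith
        simp only [dist_eq_norm] at h2
        calc ‖x - a‖ = ‖a - x‖ := by rw [norm_sub_rev]
        _ ≤ ‖a - b‖ := h2
        _ = ‖b - a‖ := by rw [norm_sub_rev]
  have hgid : g b - g a = f b - f a - fderiv ℝ f a (b - a) := by
    rw [hg]; simp only [map_sub]; abel
  rw [← hgid]
  calc ‖g b - g a‖ ≤ (L * ‖b - a‖) * ‖b - a‖ := key
  _ = L * ‖b - a‖ ^ 2 := by ring

open ContinuousLinearMap in
lemma aux_partial_fderiv {X Y : Type*}
    [NormedAddCommGroup X] [NormedSpace ℝ X]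
    [NormedAddCommGroup Y] [NormedSpace ℝ Y]
    (F : X × ℝ → Y) (hF : ContDiff ℝ 2 F) (r : X) (κ : ℝ) :
    fderiv ℝ (fun r' => F (r', κ)) r = (fderiv ℝ F (r, κ)).comp (inl ℝ X ℝ) := by
  have he : HasFDerivAt (fun r' : X => (r', κ)) (inl ℝ X ℝ) r :=
    hasFDerivAt_prodMk_left r κ
  have hFd : HasFDerivAt F (fderiv ℝ F (r, κ)) (r, κ) :=
    ((hF.differentiable (by norm_num)) (r, κ)).hasFDerivAt
  exact (hFd.comp r he).fderiv

open ContinuousLinearMap in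
lemma aux_phi_diff {X Y : Type*}
    [NormedAddCommGroup X] [NormedSpace ℝ X]
    [NormedAddCommGroup Y] [NormedSpace ℝ Y]
    (F : X × ℝ → Y) (hF : ContDiff ℝ 2 F) (r : X) :
    Differentiable ℝ (fun κ' => fderiv ℝ (fun r' => F (r', κ')) r) := by
  have heq : (fun κ' => fderiv ℝ (fun r' => F (r', κ')) r)
      = fun κ' => ((compL ℝ X (X × ℝ) Y).flip (inl ℝ X ℝ)) (fderiv ℝ F (r, κ')) := by
    funext κ'
    rw [aux_partial_fderiv F hF r κ']
    rfl
  rw [heq]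
  have h1 : ContDiff ℝ 1 (fderiv ℝ F) := hF.fderiv_right (by norm_num)
  have h2 : Differentiable ℝ (fun κ' : ℝ => fderiv ℝ F (r, κ')) :=
    ((h1.comp (contDiff_const.prodMk contDiff_id)).differentiable (by norm_num))
  exact ((compL ℝ X (X × ℝ) Y).flip (inl ℝ X ℝ)).differentiable.comp h2

lemma aux_frac (α σ ε d₁ δ : ℝ) (hα : 0 < α) (hσ : 0 < σ) (hd₁ : 0 < d₁)
    (hδ : 0 ≤ δ) (hsmall : 2 * d₁ * δ ≤ α) (h3α : 3 * α ≤ ε * (α + σ ^ 2))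
    (hε0 : 0 < ε) :
    α / (α + σ ^ 2 - 2 * d₁ * δ) ≤ ε / 3 + (2 * ε * d₁ / (3 * σ ^ 2)) * δ := by
  have hm : σ ^ 2 ≤ α + σ ^ 2 - 2 * d₁ * δ := by nlinarith
  have hmpos : 0 < α + σ ^ 2 - 2 * d₁ * δ := by nlinarith
  rw [div_le_iff₀ hmpos]
  have hc : (2 * ε * d₁ / (3 * σ ^ 2)) * δ * (α + σ ^ 2 - 2 * d₁ * δ)
      ≥ (2 * ε * d₁ / (3 * σ ^ 2)) * δ * σ ^ 2 := by
    apply mul_le_mul_of_nonneg_left hm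
    positivity
  have hc2 : (2 * ε * d₁ / (3 * σ ^ 2)) * δ * σ ^ 2 = 2 * ε * d₁ * δ / 3 := by
    field_simp
  nlinarith [mul_le_mul_of_nonneg_left hsmall (le_of_lt hε0)]

lemma aux_num0 (ε α σ s d₀ d₁ d₃ d₄ dk e : ℝ)
    (hε0 : 0 < ε) (hεd : ε * (2 + d₀) ≤ 3)
    (hα : 0 < α) (hspos : 0 < s) (hs2 : s ^ 2 = α)
    (hσ : 0 < σ) (hσd : σ ≤ d₁) (hsd : s ≤ d₁)
    (h2α : 2 * α ≤ σ ^ 2) (h3α : 3 * α ≤ ε * (α + σ ^ 2))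
    (hd₀ : 1 ≤ d₀) (hd₁ : 0 < d₁) (hd₃ : 0 < d₃) (hd₄ : 0 ≤ d₄)
    (hdk : 0 ≤ dk) (hΔ : d₁ * (d₄ * dk) ≤ 4 * ε * α / 27)
    (he0 : 0 ≤ e) (he : e ≤ d₀ * (4 * ε / (3 * d₃ * (9 * d₁ + s))) * α) :
    2 * d₁ * (d₃ * e + d₄ * dk) ≤ α ∧
    α / (α + σ ^ 2 - 2 * d₁ * (d₃ * e + d₄ * dk)) + (d₄ * dk) / (2 * s)
      + (d₃ / (2 * s)) * e ≤ ε * (2 + d₀) / 3 := by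
  have hD : (0:ℝ) < 9 * d₁ + s := by linarith
  have hε1 : ε ≤ 1 := by nlinarith
  -- d₃ * e ≤ 4 * ε * d₀ * α / (3 * (9 * d₁ + s))
  have h1 : d₃ * e ≤ 4 * ε * d₀ * α / (3 * (9 * d₁ + s)) := by
    have := mul_le_mul_of_nonneg_left he hd₃.le
    calc d₃ * e ≤ d₃ * (d₀ * (4 * ε / (3 * d₃ * (9 * d₁ + s))) * α) := this
    _ = 4 * ε * d₀ * α / (3 * (9 * d₁ + s)) := by field_simp
  -- smallness
  have hsmall : 2 * d₁ * (d₃ * e + d₄ * dk) ≤ α := by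
    have h2 : 2 * d₁ * (d₃ * e) ≤ 8 * ε * d₀ * α / 27 := by
      have h3 : 4 * ε * d₀ * α / (3 * (9 * d₁ + s)) ≤ 4 * ε * d₀ * α / (27 * d₁) := by
        apply div_le_div_of_nonneg_left (by positivity) (by positivity) (by linarith)
      have h4 : d₃ * e ≤ 4 * ε * d₀ * α / (27 * d₁) := le_trans h1 h3
      have := mul_le_mul_of_nonneg_left h4 (by positivity : (0:ℝ) ≤ 2 * d₁)
      calc 2 * d₁ * (d₃ * e) ≤ 2 * d₁ * (4 * ε * d₀ * α / (27 * d₁)) := this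
      _ = 8 * ε * d₀ * α / 27 := by field_simp; ring
    have h5 : 2 * d₁ * (d₄ * dk) ≤ 8 * ε * α / 27 := by
      nlinarith
    nlinarith
  refine ⟨hsmall, ?_⟩
  have hfrac := aux_frac α σ ε d₁ (d₃ * e + d₄ * dk) hα hσ hd₁ (by positivity)
    hsmall h3α hε0
  -- term bounds
  have hT1 : (2 * ε * d₁ / (3 * σ ^ 2)) * (d₃ * e) ≤ 4 * ε ^ 2 * d₀ / 81 := by
    have := mul_le_mul_of_nonneg_left h1 (by positivity : (0:ℝ) ≤ 2 * ε * d₁ / (3 * σ ^ 2))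
    apply le_trans this
    rw [div_mul_div_comm, div_le_div_iff₀ (by positivity) (by norm_num)]
    have hkey : (2 * α) * (9 * d₁) ≤ σ ^ 2 * (9 * d₁ + s) :=
      mul_le_mul h2α (by linarith) (by positivity) (by positivity)
    nlinarith [mul_le_mul_of_nonneg_left hkey (by positivity : (0:ℝ) ≤ 36 * (ε ^ 2 * d₀))]
  have hT2 : (d₃ / (2 * s)) * e ≤ ε * d₀ / 15 := by
    have h6 : (d₃ / (2 * s)) * e = (d₃ * e) / (2 * s) := by ring
    rw [h6]
    have h7 : (d₃ * e) / (2 * s) ≤ (4 * ε * d₀ * α / (3 * (9 * d₁ + s))) / (2 * s) :=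
      (div_le_div_iff_of_pos_right (by positivity)).mpr h1
    apply le_trans h7
    rw [div_div, div_le_div_iff₀ (by positivity) (by norm_num)]
    have hsD : 10 * s ^ 2 ≤ s * (9 * d₁ + s) := by nlinarith
    nlinarith [mul_le_mul_of_nonneg_left hsD (by positivity : (0:ℝ) ≤ 6 * (ε * d₀))]
  have hT3 : (2 * ε * d₁ / (3 * σ ^ 2)) * (d₄ * dk) ≤ 4 * ε ^ 2 / 81 := by
    have h8 : (2 * ε * d₁ / (3 * σ ^ 2)) * (d₄ * dk)
        = (2 * ε / (3 * σ ^ 2)) * (d₁ * (d₄ * dk)) := by ring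
    rw [h8]
    have := mul_le_mul_of_nonneg_left hΔ (by positivity : (0:ℝ) ≤ 2 * ε / (3 * σ ^ 2))
    apply le_trans this
    rw [div_mul_div_comm, div_le_div_iff₀ (by positivity) (by norm_num)]
    nlinarith [mul_le_mul_of_nonneg_left h2α (by positivity : (0:ℝ) ≤ 324 * ε ^ 2)]
  have hT4 : (d₄ * dk) / (2 * s) ≤ 2 * ε / 27 := by
    have h9 : d₄ * dk ≤ 4 * ε * α / (27 * d₁) := by
      rw [le_div_iff₀ (by positivity)]
      nlinarith
    have h10 : (d₄ * dk) / (2 * s) ≤ (4 * ε * α / (27 * d₁)) / (2 * s) :=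
      (div_le_div_iff_of_pos_right (by positivity)).mpr h9
    apply le_trans h10
    rw [div_div, div_le_div_iff₀ (by positivity) (by norm_num)]
    nlinarith [mul_le_mul_of_nonneg_left hsd hspos.le, hs2,
      mul_le_mul_of_nonneg_left hsd (by positivity : (0:ℝ) ≤ 108 * ε * s)]
  have hdist : (2 * ε * d₁ / (3 * σ ^ 2)) * (d₃ * e + d₄ * dk)
      = (2 * ε * d₁ / (3 * σ ^ 2)) * (d₃ * e) + (2 * ε * d₁ / (3 * σ ^ 2)) * (d₄ * dk) := by
    ring
  rw [hdist] at hfrac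
  have hεd₀ : 0 ≤ ε * d₀ := by positivity
  nlinarith [hfrac, hT1, hT2, hT3, hT4]

lemma aux_num1 (ε α σ s d₀ d₁ d₃ e : ℝ)
    (hε0 : 0 < ε) (hεd : ε * (2 + d₀) ≤ 3)
    (hα : 0 < α) (hspos : 0 < s) (hs2 : s ^ 2 = α)
    (hσ : 0 < σ) (hσd : σ ≤ d₁) (hsd : s ≤ d₁)
    (h2α : 2 * α ≤ σ ^ 2) (h3α : 3 * α ≤ ε * (α + σ ^ 2))
    (hd₀ : 1 ≤ d₀) (hd₁ : 0 < d₁) (hd₃ : 0 < d₃)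
    (he0 : 0 ≤ e) (he : e ≤ d₀ * (4 * ε / (3 * d₃ * (9 * d₁ + s))) * α) :
    2 * d₁ * (d₃ * e) ≤ α ∧
    α / (α + σ ^ 2 - 2 * d₁ * (d₃ * e)) + (d₃ / (2 * s)) * e ≤ ε * (1 + d₀) / 3 := by
  have hD : (0:ℝ) < 9 * d₁ + s := by linarith
  have hε1 : ε ≤ 1 := by nlinarith
  have h1 : d₃ * e ≤ 4 * ε * d₀ * α / (3 * (9 * d₁ + s)) := by
    have := mul_le_mul_of_nonneg_left he hd₃.le
    calc d₃ * e ≤ d₃ * (d₀ * (4 * ε / (3 * d₃ * (9 * d₁ + s))) * α) := this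
    _ = 4 * ε * d₀ * α / (3 * (9 * d₁ + s)) := by field_simp
  have hsmall : 2 * d₁ * (d₃ * e) ≤ α := by
    have h3 : 4 * ε * d₀ * α / (3 * (9 * d₁ + s)) ≤ 4 * ε * d₀ * α / (27 * d₁) := by
      apply div_le_div_of_nonneg_left (by positivity) (by positivity) (by linarith)
    have h4 : d₃ * e ≤ 4 * ε * d₀ * α / (27 * d₁) := le_trans h1 h3
    have := mul_le_mul_of_nonneg_left h4 (by positivity : (0:ℝ) ≤ 2 * d₁)
    have h5 : 2 * d₁ * (4 * ε * d₀ * α / (27 * d₁)) = 8 * ε * d₀ * α / 27 := by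
      field_simp; ring
    rw [h5] at this
    nlinarith
  refine ⟨hsmall, ?_⟩
  have hfrac := aux_frac α σ ε d₁ (d₃ * e) hα hσ hd₁ (by positivity) hsmall h3α hε0
  have hT1 : (2 * ε * d₁ / (3 * σ ^ 2)) * (d₃ * e) ≤ 4 * ε ^ 2 * d₀ / 81 := by
    have := mul_le_mul_of_nonneg_left h1 (by positivity : (0:ℝ) ≤ 2 * ε * d₁ / (3 * σ ^ 2))
    apply le_trans this
    rw [div_mul_div_comm, div_le_div_iff₀ (by positivity) (by norm_num)]
    have hkey : (2 * α) * (9 * d₁) ≤ σ ^ 2 * (9 * d₁ + s) :=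
      mul_le_mul h2α (by linarith) (by positivity) (by positivity)
    nlinarith [mul_le_mul_of_nonneg_left hkey (by positivity : (0:ℝ) ≤ 36 * (ε ^ 2 * d₀))]
  have hT2 : (d₃ / (2 * s)) * e ≤ ε * d₀ / 15 := by
    have h6 : (d₃ / (2 * s)) * e = (d₃ * e) / (2 * s) := by ring
    rw [h6]
    have h7 : d₃ * e / (2 * s) ≤ 4 * ε * d₀ * α / (3 * (9 * d₁ + s)) / (2 * s) :=
      (div_le_div_iff_of_pos_right (by positivity)).mpr h1
    apply le_trans h7
    rw [div_div, div_le_div_iff₀ (by positivity) (by norm_num)]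
    have hsD : 10 * s ^ 2 ≤ s * (9 * d₁ + s) := by nlinarith
    nlinarith [mul_le_mul_of_nonneg_left hsD (by positivity : (0:ℝ) ≤ 6 * (ε * d₀))]
  have hεd₀ : 0 ≤ ε * d₀ := by positivity
  nlinarith [hfrac, hT1, hT2]

/-- Convergence rate of the projected recursive Newton method with exact data
(Theorem 2.1, explicit form). -/
theorem stmt_15 {X Y : Type*}
    [NormedAddCommGroup X] [InnerProductSpace ℝ X] [CompleteSpace X]
    [NormedAddCommGroup Y] [InnerProductSpace ℝ Y] [CompleteSpace Y]
    (N J : ℕ) (hN : 1 ≤ N) (hJ : 1 ≤ J)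
    (kl Δk : ℝ) (hΔk : 0 < Δk)
    (k : ℕ → ℝ) (hk : ∀ n : ℕ, k n = kl + n * Δk)
    (Xs : ℕ → Submodule ℝ X)
    (hXsclosed : ∀ n, n ≤ N → IsClosed ((Xs n : Set X)))
    (hXsmono : ∀ n, n < N → Xs n ≤ Xs (n + 1))
    (P : ℕ → X →L[ℝ] X)
    (hP : ∀ n, n ≤ N → ∀ x : X, P n x ∈ Xs n ∧ x - P n x ∈ (Xs n)ᗮ)
    (F : X × ℝ → Y) (hF : ContDiff ℝ 2 F)
    (d₀ d₁ d₂ d₃ d₄ : ℝ) (hd₀ : 1 ≤ d₀) (hd₁ : 0 < d₁) (hd₂ : 0 < d₂)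
    (hd₃ : 0 < d₃) (hd₄ : 0 < d₄)
    (hFr : ∀ (r : X) (κ : ℝ), ‖fderiv ℝ (fun r' => F (r', κ)) r‖ ≤ d₁)
    (hFk : ∀ (r : X) (κ : ℝ), ‖deriv (fun κ' => F (r, κ')) κ‖ ≤ d₂)
    (hFrr : ∀ (r : X) (κ : ℝ),
      ‖fderiv ℝ (fun r' => fderiv ℝ (fun r'' => F (r'', κ)) r') r‖ ≤ d₃)
    (hFkr : ∀ (r : X) (κ : ℝ),
      ‖deriv (fun κ' => fderiv ℝ (fun r' => F (r', κ')) r) κ‖ ≤ d₄)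
    (rt : ℕ → X)
    (hrtmem : ∀ n, n ≤ N → rt n ∈ Xs n)
    (hrtzero : ∀ n, n ≤ N → F (rt n, k n) = 0)
    (hrtstep : ∀ n, n < N → ‖rt (n + 1) - rt n‖ ≤ d₀ * Δk)
    (σ : ℝ) (hσ : 0 < σ)
    (hlow : ∀ n, n ≤ N → ∀ x : X,
      σ * ‖x‖ ≤ ‖fderiv ℝ (fun r' => F (r', k n)) (rt n) x‖)
    (ε α : ℝ) (hε0 : 0 < ε) (hε1 : ε < 3 / (2 + d₀))
    (hα : 0 < α) (hαle : α ≤ ε * σ ^ 2 / (3 - ε))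
    (c₀ q b : ℝ)
    (hc₀ : c₀ = 4 * ε / (3 * d₃ * (9 * d₁ + Real.sqrt α)))
    (hqdef : q = ε * (1 + d₀) / 3)
    (hbdef : b = ε * (2 + d₀) / 3)
    (hstep1 : 9 * d₁ * d₄ / (4 * α) * Δk ≤ ε / 3)
    (hstep2 : Δk * (1 + d₂ / (2 * d₀ * Real.sqrt α)) ≤ (1 - b) * c₀ * α)
    (r : ℕ → X) (rr : ℕ → ℕ → X)
    (A : ℕ → ℕ → X →L[ℝ] Y)
    (hA : ∀ n, n < N → ∀ j, j < J →
      A n j = fderiv ℝ (fun r' => F (r', k (n + 1))) (rr n j))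
    (B : ℕ → ℕ → X →L[ℝ] X)
    (hB : ∀ n, n < N → ∀ j, j < J →
      B n j ∘L (α • (1 : X →L[ℝ] X) +
        ContinuousLinearMap.adjoint (A n j) ∘L A n j) = 1 ∧
      (α • (1 : X →L[ℝ] X) +
        ContinuousLinearMap.adjoint (A n j) ∘L A n j) ∘L B n j = 1)
    (hrr0 : ∀ n, n < N → rr n 0 = r n)
    (hrrstep : ∀ n, n < N → ∀ j, j < J →
      rr n (j + 1) = rr n j - P (n + 1)
        ((B n j ∘L ContinuousLinearMap.adjoint (A n j)) (F (rr n j, k (n + 1)))))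
    (hrJ : ∀ n, n < N → r (n + 1) = rr n J)
    (hr0mem : r 0 ∈ Xs 0)
    (hinit : ‖rt 0 - r 0‖ ≤ d₀ * c₀ * α) :
    (∀ n, n ≤ N → ‖rt n - r n‖ ≤ d₀ * c₀ * α) ∧
    ‖rt N - r N‖ ≤
      q ^ (J - 1) * Δk * (d₀ + d₂ / (2 * Real.sqrt α)) / (1 - q ^ (J - 1) * b) +
      (q ^ (J - 1) * b) ^ N * (d₀ * c₀ * α) := by
  have hs2 : Real.sqrt α ^ 2 = α := Real.sq_sqrt hα.le
  have hspos : 0 < Real.sqrt α := Real.sqrt_pos.mpr hα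
  set s := Real.sqrt α with hsdef
  have hd₀0 : (0:ℝ) < d₀ := lt_of_lt_of_le one_pos hd₀
  have hεd : ε * (2 + d₀) < 3 := by
    have h2d : (0:ℝ) < 2 + d₀ := by linarith
    have h3 := (lt_div_iff₀ h2d).mp hε1
    linarith only [h3]
  have hε1' : ε ≤ 1 := by
    nlinarith only [hεd.le, mul_nonneg hε0.le (sub_nonneg.mpr hd₀)]
  have hc₀pos : 0 < c₀ := by rw [hc₀]; positivity
  have hq0 : 0 < q := by
    rw [hqdef]; apply div_pos (mul_pos hε0 (by linarith)) (by norm_num)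
  have hb0 : 0 < b := by
    rw [hbdef]; apply div_pos (mul_pos hε0 (by linarith)) (by norm_num)
  have hq1 : q < 1 := by rw [hqdef]; nlinarith only [hεd, hε0]
  have hb1 : b < 1 := by rw [hbdef]; nlinarith only [hεd, hε0, hd₀0]
  have hqb : q ≤ b := by rw [hqdef, hbdef]; nlinarith only [hε0]
  have hqJ : q ^ (J - 1) ≤ 1 := pow_le_one₀ hq0.le hq1.le
  have hqJ0 : 0 < q ^ (J - 1) := pow_pos hq0 _
  have hxq1 : q ^ (J - 1) * b < 1 := by nlinarith only [hqJ, hqJ0, hb0, hb1]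
  have hden : 0 < 1 - q ^ (J - 1) * b := by linarith
  rcases subsingleton_or_nontrivial X with hsub | hnontriv
  · have hz : ∀ n : ℕ, rt n - r n = 0 := fun n => Subsingleton.elim _ _
    constructor
    · intro n hn
      rw [hz n, norm_zero]
      positivity
    · rw [hz N, norm_zero]
      have h1 : 0 ≤ q ^ (J - 1) * Δk * (d₀ + d₂ / (2 * s)) / (1 - q ^ (J - 1) * b) := by
        apply div_nonneg _ hden.le
        positivity
      have h2 : 0 ≤ (q ^ (J - 1) * b) ^ N * (d₀ * c₀ * α) := by positivity
      linarith only [h1, h2]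
  -- nontrivial case
  obtain ⟨x₀, hx₀⟩ := exists_ne (0 : X)
  have hx₀n : 0 < ‖x₀‖ := norm_pos_iff.mpr hx₀
  have hσd : σ ≤ d₁ := by
    have h1 := hlow 0 (by omega) x₀
    have h2 : ‖fderiv ℝ (fun r' => F (r', k 0)) (rt 0) x₀‖
        ≤ ‖fderiv ℝ (fun r' => F (r', k 0)) (rt 0)‖ * ‖x₀‖ :=
      ContinuousLinearMap.le_opNorm _ _
    have h3 := hFr (rt 0) (k 0)
    have h4 : σ * ‖x₀‖ ≤ d₁ * ‖x₀‖ := by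
      linarith only [h1, h2, mul_le_mul_of_nonneg_right h3 (norm_nonneg x₀)]
    exact le_of_mul_le_mul_right h4 hx₀n
  have h3ε : (0:ℝ) < 3 - ε := by linarith
  have h3α : 3 * α ≤ ε * (α + σ ^ 2) := by
    have h5 := (le_div_iff₀ h3ε).mp hαle
    nlinarith only [h5]
  have h2α : 2 * α ≤ σ ^ 2 := by
    nlinarith only [h3α, mul_nonneg (sub_nonneg.mpr hε1') hα.le,
      mul_nonneg (sub_nonneg.mpr hε1') (sq_nonneg σ)]
  have hsσ : s ≤ σ := by
    rw [hsdef]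
    have hle : α ≤ σ ^ 2 := by linarith only [h2α, hα]
    calc Real.sqrt α ≤ Real.sqrt (σ ^ 2) := Real.sqrt_le_sqrt hle
    _ = σ := Real.sqrt_sq hσ.le
  have hsd : s ≤ d₁ := le_trans hsσ hσd
  -- calculus facts
  have hg2 : ∀ κ : ℝ, ContDiff ℝ 2 (fun r' : X => F (r', κ)) := fun κ =>
    hF.comp (contDiff_id.prodMk contDiff_const)
  have hgdiff : ∀ κ : ℝ, Differentiable ℝ (fun r' : X => F (r', κ)) := fun κ =>
    (hg2 κ).differentiable (by norm_num)
  have hDgdiff : ∀ κ : ℝ,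
      Differentiable ℝ (fun r' : X => fderiv ℝ (fun r'' : X => F (r'', κ)) r') := by
    intro κ
    have h1 : ContDiff ℝ 1 (fderiv ℝ (fun r'' : X => F (r'', κ))) :=
      (hg2 κ).fderiv_right (m := 1) (by norm_num)
    exact h1.differentiable (by norm_num)
  have hlipDg : ∀ (κ : ℝ) (a b : X),
      ‖fderiv ℝ (fun r' : X => F (r', κ)) a - fderiv ℝ (fun r' : X => F (r', κ)) b‖
        ≤ d₃ * ‖a - b‖ := fun κ a b =>
    aux_lip_fderiv _ (hDgdiff κ) d₃ (fun x => hFrr x κ) b a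
  have hTay : ∀ (κ : ℝ) (a b : X),
      ‖F (b, κ) - F (a, κ) - fderiv ℝ (fun r' : X => F (r', κ)) a (b - a)‖
        ≤ d₃ * ‖b - a‖ ^ 2 := by
    intro κ a b
    simpa using aux_taylor _ (hgdiff κ) d₃ hd₃.le (fun x y => hlipDg κ x y) a b
  have hkLip : ∀ (x : X) (κ₁ κ₂ : ℝ), ‖F (x, κ₂) - F (x, κ₁)‖ ≤ d₂ * |κ₂ - κ₁| := by
    intro x κ₁ κ₂
    have hdiff : Differentiable ℝ (fun κ' : ℝ => F (x, κ')) :=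
      (hF.comp (contDiff_const.prodMk contDiff_id)).differentiable (by norm_num)
    simpa using aux_lip_deriv _ hdiff d₂ (fun t => hFk x t) κ₁ κ₂
  have hkLipD : ∀ (x : X) (κ₁ κ₂ : ℝ),
      ‖fderiv ℝ (fun r' : X => F (r', κ₂)) x - fderiv ℝ (fun r' : X => F (r', κ₁)) x‖
        ≤ d₄ * |κ₂ - κ₁| := by
    intro x κ₁ κ₂
    simpa using aux_lip_deriv _ (aux_phi_diff F hF x) d₄ (fun t => hFkr x t) κ₁ κ₂
  have hkdiff : ∀ n : ℕ, k (n + 1) - k n = Δk := by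
    intro n; rw [hk, hk]; push_cast; ring
  have hstep1' : d₁ * (d₄ * Δk) ≤ 4 * ε * α / 27 := by
    have h := hstep1
    rw [div_mul_eq_mul_div, div_le_iff₀ (by positivity : (0:ℝ) < 4 * α)] at h
    linarith only [h]
  -- the key one-frequency step
  have key : ∀ n, n < N → r n ∈ Xs n → ‖rt n - r n‖ ≤ d₀ * c₀ * α →
      (r (n + 1) ∈ Xs (n + 1) ∧
       ‖rt (n + 1) - r (n + 1)‖
         ≤ q ^ (J - 1) * (b * ‖rt n - r n‖ + Δk * (d₀ + d₂ / (2 * s))) ∧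
       ‖rt (n + 1) - r (n + 1)‖ ≤ d₀ * c₀ * α) := by
    intro n hn hmem hen
    have hn1 : n + 1 ≤ N := hn
    have hJ0 : 0 < J := hJ
    have hmemj : ∀ j, j ≤ J → rr n j ∈ Xs (n + 1) := by
      intro j
      induction j with
      | zero => intro _; rw [hrr0 n hn]; exact hXsmono n hn hmem
      | succ j ih =>
        intro hjJ
        have hj : j < J := hjJ
        rw [hrrstep n hn j hj]
        exact Submodule.sub_mem _ (ih hj.le) (hP (n + 1) hn1 _).1
    have hrtm : rt (n + 1) ∈ Xs (n + 1) := hrtmem (n + 1) hn1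
    have contract : ∀ j, j < J → ∀ t : X, t ∈ Xs (n + 1) →
        ‖t - rr n (j + 1)‖ ≤ ‖t - rr n j +
          (B n j) ((ContinuousLinearMap.adjoint (A n j)) (F (rr n j, k (n + 1))))‖ := by
      intro j hj t ht
      rw [hrrstep n hn j hj]
      have h1 : t - (rr n j - P (n + 1)
            ((B n j ∘L ContinuousLinearMap.adjoint (A n j)) (F (rr n j, k (n + 1)))))
          = (t - rr n j) + P (n + 1)
            ((B n j ∘L ContinuousLinearMap.adjoint (A n j)) (F (rr n j, k (n + 1)))) := by
        abel
      have h2 : P (n + 1) (t - rr n j) = t - rr n j :=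
        aux_proj_fix (Xs (n + 1)) _ _ (hP (n + 1) hn1 _).1 (hP (n + 1) hn1 _).2
          (Submodule.sub_mem _ ht (hmemj j hj.le))
      have h3 : (t - rr n j) + P (n + 1)
            ((B n j ∘L ContinuousLinearMap.adjoint (A n j)) (F (rr n j, k (n + 1))))
          = P (n + 1) (t - rr n j +
            (B n j ∘L ContinuousLinearMap.adjoint (A n j)) (F (rr n j, k (n + 1)))) := by
        rw [map_add, h2]
      rw [h1, h3]
      exact aux_proj_norm (Xs (n + 1)) _ _ (hP (n + 1) hn1 _).1 (hP (n + 1) hn1 _).2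
    -- generic Newton contraction step
    have stepj : ∀ j, j < J → ‖rt (n + 1) - rr n j‖ ≤ d₀ * c₀ * α →
        ‖rt (n + 1) - rr n (j + 1)‖ ≤ q * ‖rt (n + 1) - rr n j‖ := by
      intro j hjJ he
      have hAj := hA n hn j hjJ
      obtain ⟨hBl, hBr⟩ := hB n hn j hjJ
      have he0 : (0:ℝ) ≤ ‖rt (n + 1) - rr n j‖ := norm_nonneg _
      have hQ : ‖F (rt (n + 1), k (n + 1)) - F (rr n j, k (n + 1))
            - (A n j) (rt (n + 1) - rr n j)‖ ≤ d₃ * ‖rt (n + 1) - rr n j‖ ^ 2 := by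
        rw [hAj]
        simpa using hTay (k (n + 1)) (rr n j) (rt (n + 1))
      set Q := F (rt (n + 1), k (n + 1)) - F (rr n j, k (n + 1))
        - (A n j) (rt (n + 1) - rr n j) with hQdef
      set e := ‖rt (n + 1) - rr n j‖ with hedef
      have hFx : F (rr n j, k (n + 1)) = -((A n j) (rt (n + 1) - rr n j)) - Q := by
        rw [hQdef, hrtzero (n + 1) hn1]
        abel
      have hvec : rt (n + 1) - rr n j +
            (B n j) ((ContinuousLinearMap.adjoint (A n j)) (F (rr n j, k (n + 1))))
          = α • (B n j) (rt (n + 1) - rr n j)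
            - (B n j) ((ContinuousLinearMap.adjoint (A n j)) Q) := by
        have e1 : (ContinuousLinearMap.adjoint (A n j)) (F (rr n j, k (n + 1)))
            = -((ContinuousLinearMap.adjoint (A n j)) ((A n j) (rt (n + 1) - rr n j)))
              - (ContinuousLinearMap.adjoint (A n j)) Q := by
          rw [hFx, map_sub, map_neg]
        have e2 : (B n j) ((ContinuousLinearMap.adjoint (A n j)) (F (rr n j, k (n + 1))))
            = -((B n j) ((ContinuousLinearMap.adjoint (A n j)) ((A n j) (rt (n + 1) - rr n j))))
              - (B n j) ((ContinuousLinearMap.adjoint (A n j)) Q) := by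
          rw [e1, map_sub, map_neg]
        rw [e2, aux_inv_id α (A n j) (B n j) hBl (rt (n + 1) - rr n j)]
        abel
      have hnum := aux_num1 ε α σ s d₀ d₁ d₃ e hε0 hεd.le hα hspos hs2 hσ hσd hsd h2α h3α
        hd₀ hd₁ hd₃ he0 (by rw [← hc₀]; exact he)
      obtain ⟨hsmall, hcoef⟩ := hnum
      have hm : 0 < α + σ ^ 2 - 2 * d₁ * (d₃ * e) := by
        linarith only [hsmall, pow_pos hσ 2]
      have hlow' : ∀ v : X, (α + σ ^ 2 - 2 * d₁ * (d₃ * e)) * ‖v‖ ^ 2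
          ≤ α * ‖v‖ ^ 2 + ‖(A n j) v‖ ^ 2 := by
        intro v
        have h1 := hlow (n + 1) hn1 v
        have hd : ‖A n j - fderiv ℝ (fun r' => F (r', k (n + 1))) (rt (n + 1))‖ ≤ d₃ * e := by
          calc ‖A n j - fderiv ℝ (fun r' => F (r', k (n + 1))) (rt (n + 1))‖
              ≤ d₃ * ‖rr n j - rt (n + 1)‖ := by rw [hAj]; exact hlipDg (k (n + 1)) _ _
          _ = d₃ * e := by rw [norm_sub_rev]
        have h2 : ‖fderiv ℝ (fun r' => F (r', k (n + 1))) (rt (n + 1)) v‖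
            ≤ ‖(A n j) v‖ + (d₃ * e) * ‖v‖ := by
          have h3 : fderiv ℝ (fun r' => F (r', k (n + 1))) (rt (n + 1)) v
              = (A n j) v + ((fderiv ℝ (fun r' => F (r', k (n + 1))) (rt (n + 1)) - A n j) v) := by
            simp [ContinuousLinearMap.sub_apply]
          rw [h3]
          apply le_trans (norm_add_le _ _)
          have h4 : ‖(fderiv ℝ (fun r' => F (r', k (n + 1))) (rt (n + 1)) - A n j) v‖
              ≤ (d₃ * e) * ‖v‖ := by
            apply le_trans (ContinuousLinearMap.le_opNorm _ _)
            apply mul_le_mul_of_nonneg_right _ (norm_nonneg v)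
            rw [norm_sub_rev]; exact hd
          linarith only [h4]
        have h5 : (σ - d₃ * e) * ‖v‖ ≤ ‖(A n j) v‖ := by nlinarith only [h1, h2]
        have h6 : (0:ℝ) ≤ σ - d₃ * e := by
          nlinarith only [hsmall, h2α, mul_le_mul_of_nonneg_left hσd hσ.le, hd₁, hσ,
            mul_pos hd₁ hσ]
        have h7 : (σ - d₃ * e) ^ 2 * ‖v‖ ^ 2 ≤ ‖(A n j) v‖ ^ 2 := by
          have h8 := mul_le_mul h5 h5 (mul_nonneg h6 (norm_nonneg v)) (norm_nonneg _)
          nlinarith only [h8]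
        nlinarith only [h7,
          mul_nonneg (mul_nonneg (by positivity : (0:ℝ) ≤ 2 * (d₃ * e))
            (sub_nonneg.mpr hσd)) (sq_nonneg ‖v‖),
          mul_nonneg (sq_nonneg (d₃ * e)) (sq_nonneg ‖v‖)]
      have hBv : ‖(B n j) (rt (n + 1) - rr n j)‖
          ≤ e / (α + σ ^ 2 - 2 * d₁ * (d₃ * e)) :=
        aux_Balpha α (A n j) (B n j) hBr _ hm hlow' _
      have hRQ : ‖(B n j) ((ContinuousLinearMap.adjoint (A n j)) Q)‖
          ≤ (d₃ * e ^ 2) / (2 * s) := by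
        apply le_trans (aux_Ralpha α hα (A n j) (B n j) hBr Q)
        rw [← hsdef]
        exact (div_le_div_iff_of_pos_right (by positivity)).mpr hQ
      have hub := contract j hjJ (rt (n + 1)) hrtm
      have hub2 : ‖rt (n + 1) - rr n (j + 1)‖
          ≤ ‖α • (B n j) (rt (n + 1) - rr n j)
              - (B n j) ((ContinuousLinearMap.adjoint (A n j)) Q)‖ := by
        rw [← hvec]; exact hub
      have h9 : ‖α • (B n j) (rt (n + 1) - rr n j)‖ = α * ‖(B n j) (rt (n + 1) - rr n j)‖ := by
        rw [norm_smul, Real.norm_eq_abs, abs_of_pos hα]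
      have h10 : α * ‖(B n j) (rt (n + 1) - rr n j)‖
          ≤ (α / (α + σ ^ 2 - 2 * d₁ * (d₃ * e))) * e := by
        calc α * ‖(B n j) (rt (n + 1) - rr n j)‖
            ≤ α * (e / (α + σ ^ 2 - 2 * d₁ * (d₃ * e))) :=
              mul_le_mul_of_nonneg_left hBv hα.le
        _ = (α / (α + σ ^ 2 - 2 * d₁ * (d₃ * e))) * e := by ring
      have hchain : ‖rt (n + 1) - rr n (j + 1)‖
          ≤ (α / (α + σ ^ 2 - 2 * d₁ * (d₃ * e))) * e + (d₃ / (2 * s)) * e * e := by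
        apply le_trans hub2
        apply le_trans (norm_sub_le _ _)
        rw [h9]
        have h11 : (d₃ * e ^ 2) / (2 * s) = (d₃ / (2 * s)) * e * e := by ring
        rw [h11] at hRQ
        linarith only [h10, hRQ]
      calc ‖rt (n + 1) - rr n (j + 1)‖
          ≤ (α / (α + σ ^ 2 - 2 * d₁ * (d₃ * e))) * e + (d₃ / (2 * s)) * e * e := hchain
      _ = (α / (α + σ ^ 2 - 2 * d₁ * (d₃ * e)) + (d₃ / (2 * s)) * e) * e := by ring
      _ ≤ q * e := by
          apply mul_le_mul_of_nonneg_right _ he0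
          rw [hqdef]
          exact hcoef
    -- the first Newton iteration, from level n data
    have hAj0 := hA n hn 0 hJ0
    obtain ⟨hBl0, hBr0⟩ := hB n hn 0 hJ0
    have hx0 : rr n 0 = r n := hrr0 n hn
    rw [hx0] at hAj0
    have hen0 : (0:ℝ) ≤ ‖rt n - r n‖ := norm_nonneg _
    have hQ' : ‖F (rt n, k n) - F (r n, k n)
          - fderiv ℝ (fun r' : X => F (r', k n)) (r n) (rt n - r n)‖
        ≤ d₃ * ‖rt n - r n‖ ^ 2 := by simpa using hTay (k n) (r n) (rt n)
    set A' := fderiv ℝ (fun r' : X => F (r', k n)) (r n) with hA'def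
    set Q' := F (rt n, k n) - F (r n, k n) - A' (rt n - r n) with hQ'def
    have hFxkn : F (r n, k n) = -((A n 0) (rt n - r n)) + ((A n 0) - A') (rt n - r n) - Q' := by
      rw [hQ'def, hrtzero n hn.le]
      simp only [ContinuousLinearMap.sub_apply]
      abel
    have hmid : rt n - r n + (B n 0) ((ContinuousLinearMap.adjoint (A n 0)) (F (r n, k n)))
        = α • (B n 0) (rt n - r n)
          + (B n 0) ((ContinuousLinearMap.adjoint (A n 0)) (((A n 0) - A') (rt n - r n)))
          - (B n 0) ((ContinuousLinearMap.adjoint (A n 0)) Q') := by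
      have e1 : (ContinuousLinearMap.adjoint (A n 0)) (F (r n, k n))
          = -((ContinuousLinearMap.adjoint (A n 0)) ((A n 0) (rt n - r n)))
            + (ContinuousLinearMap.adjoint (A n 0)) (((A n 0) - A') (rt n - r n))
            - (ContinuousLinearMap.adjoint (A n 0)) Q' := by
        rw [hFxkn, map_sub, map_add, map_neg]
      have e2 : (B n 0) ((ContinuousLinearMap.adjoint (A n 0)) (F (r n, k n)))
          = -((B n 0) ((ContinuousLinearMap.adjoint (A n 0)) ((A n 0) (rt n - r n))))
            + (B n 0) ((ContinuousLinearMap.adjoint (A n 0)) (((A n 0) - A') (rt n - r n)))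
            - (B n 0) ((ContinuousLinearMap.adjoint (A n 0)) Q') := by
        rw [e1, map_sub, map_add, map_neg]
      rw [e2, aux_inv_id α (A n 0) (B n 0) hBl0 (rt n - r n)]
      abel
    have htot : (B n 0) ((ContinuousLinearMap.adjoint (A n 0)) (F (r n, k (n + 1))))
        = (B n 0) ((ContinuousLinearMap.adjoint (A n 0)) (F (r n, k n)))
          + (B n 0) ((ContinuousLinearMap.adjoint (A n 0)) (F (r n, k (n + 1)) - F (r n, k n))) := by
      rw [← map_add, ← map_add]
      have hsp : F (r n, k (n + 1)) = F (r n, k n) + (F (r n, k (n + 1)) - F (r n, k n)) := by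
        abel
      rw [← hsp]
    have hvec0 : rt (n + 1) - rr n 0
          + (B n 0) ((ContinuousLinearMap.adjoint (A n 0)) (F (rr n 0, k (n + 1))))
        = (rt (n + 1) - rt n)
          + (α • (B n 0) (rt n - r n)
             + (B n 0) ((ContinuousLinearMap.adjoint (A n 0)) (((A n 0) - A') (rt n - r n)))
             - (B n 0) ((ContinuousLinearMap.adjoint (A n 0)) Q'))
          + (B n 0) ((ContinuousLinearMap.adjoint (A n 0)) (F (r n, k (n + 1)) - F (r n, k n))) := by
      rw [hx0, htot, ← hmid]
      abel
    have hnum0 := aux_num0 ε α σ s d₀ d₁ d₃ d₄ Δk ‖rt n - r n‖ hε0 hεd.le hα hspos hs2 hσ hσd hsd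
      h2α h3α hd₀ hd₁ hd₃ hd₄.le hΔk.le hstep1' hen0 (by rw [← hc₀]; exact hen)
    obtain ⟨hsmall0, hcoef0⟩ := hnum0
    have hm0 : 0 < α + σ ^ 2 - 2 * d₁ * (d₃ * ‖rt n - r n‖ + d₄ * Δk) := by
      linarith only [hsmall0, pow_pos hσ 2]
    have hkabs : |k (n + 1) - k n| = Δk := by rw [hkdiff n]; exact abs_of_pos hΔk
    have hd4 : ‖(A n 0) - A'‖ ≤ d₄ * Δk := by
      rw [hAj0, hA'def]
      have h := hkLipD (r n) (k n) (k (n + 1))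
      rwa [hkabs] at h
    have hd3 : ‖A' - fderiv ℝ (fun r' : X => F (r', k n)) (rt n)‖ ≤ d₃ * ‖rt n - r n‖ := by
      rw [hA'def]
      calc ‖fderiv ℝ (fun r' : X => F (r', k n)) (r n)
            - fderiv ℝ (fun r' : X => F (r', k n)) (rt n)‖
          ≤ d₃ * ‖r n - rt n‖ := hlipDg (k n) (r n) (rt n)
      _ = d₃ * ‖rt n - r n‖ := by rw [norm_sub_rev]
    have hdsum : ‖(A n 0) - fderiv ℝ (fun r' : X => F (r', k n)) (rt n)‖
        ≤ d₃ * ‖rt n - r n‖ + d₄ * Δk := by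
      have htri : (A n 0) - fderiv ℝ (fun r' : X => F (r', k n)) (rt n)
          = ((A n 0) - A') + (A' - fderiv ℝ (fun r' : X => F (r', k n)) (rt n)) := by abel
      rw [htri]
      apply le_trans (norm_add_le _ _)
      linarith only [hd4, hd3]
    have hlow0 : ∀ v : X, (α + σ ^ 2 - 2 * d₁ * (d₃ * ‖rt n - r n‖ + d₄ * Δk)) * ‖v‖ ^ 2
        ≤ α * ‖v‖ ^ 2 + ‖(A n 0) v‖ ^ 2 := by
      intro v
      have h1 := hlow n hn.le v
      have h2 : ‖fderiv ℝ (fun r' => F (r', k n)) (rt n) v‖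
          ≤ ‖(A n 0) v‖ + (d₃ * ‖rt n - r n‖ + d₄ * Δk) * ‖v‖ := by
        have h3 : fderiv ℝ (fun r' => F (r', k n)) (rt n) v
            = (A n 0) v + ((fderiv ℝ (fun r' => F (r', k n)) (rt n) - A n 0) v) := by
          simp [ContinuousLinearMap.sub_apply]
        rw [h3]
        apply le_trans (norm_add_le _ _)
        have h4 : ‖(fderiv ℝ (fun r' => F (r', k n)) (rt n) - A n 0) v‖
            ≤ (d₃ * ‖rt n - r n‖ + d₄ * Δk) * ‖v‖ := by
          apply le_trans (ContinuousLinearMap.le_opNorm _ _)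
          apply mul_le_mul_of_nonneg_right _ (norm_nonneg v)
          rw [norm_sub_rev]; exact hdsum
        linarith only [h4]
      have h5 : (σ - (d₃ * ‖rt n - r n‖ + d₄ * Δk)) * ‖v‖ ≤ ‖(A n 0) v‖ := by
        nlinarith only [h1, h2]
      have h6 : (0:ℝ) ≤ σ - (d₃ * ‖rt n - r n‖ + d₄ * Δk) := by
        nlinarith only [hsmall0, h2α, mul_le_mul_of_nonneg_left hσd hσ.le, hd₁, hσ,
          mul_pos hd₁ hσ]
      have h8 := mul_le_mul h5 h5 (mul_nonneg h6 (norm_nonneg v)) (norm_nonneg _)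
      have h7 : (σ - (d₃ * ‖rt n - r n‖ + d₄ * Δk)) ^ 2 * ‖v‖ ^ 2 ≤ ‖(A n 0) v‖ ^ 2 := by
        nlinarith only [h8]
      nlinarith only [h7,
        mul_nonneg (mul_nonneg (by positivity : (0:ℝ) ≤ 2 * (d₃ * ‖rt n - r n‖ + d₄ * Δk))
          (sub_nonneg.mpr hσd)) (sq_nonneg ‖v‖),
        mul_nonneg (sq_nonneg (d₃ * ‖rt n - r n‖ + d₄ * Δk)) (sq_nonneg ‖v‖)]
    have hBv0 : ‖(B n 0) (rt n - r n)‖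
        ≤ ‖rt n - r n‖ / (α + σ ^ 2 - 2 * d₁ * (d₃ * ‖rt n - r n‖ + d₄ * Δk)) :=
      aux_Balpha α (A n 0) (B n 0) hBr0 _ hm0 hlow0 _
    have hRQ0 : ‖(B n 0) ((ContinuousLinearMap.adjoint (A n 0)) Q')‖
        ≤ d₃ / (2 * s) * ‖rt n - r n‖ * ‖rt n - r n‖ := by
      have hstep : ‖(B n 0) ((ContinuousLinearMap.adjoint (A n 0)) Q')‖
          ≤ (d₃ * ‖rt n - r n‖ ^ 2) / (2 * s) := by
        apply le_trans (aux_Ralpha α hα (A n 0) (B n 0) hBr0 Q')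
        rw [← hsdef]
        exact (div_le_div_iff_of_pos_right (by positivity)).mpr hQ'
      have heq : (d₃ * ‖rt n - r n‖ ^ 2) / (2 * s)
          = d₃ / (2 * s) * ‖rt n - r n‖ * ‖rt n - r n‖ := by ring
      rw [heq] at hstep
      exact hstep
    have hmidterm : ‖(B n 0) ((ContinuousLinearMap.adjoint (A n 0)) (((A n 0) - A') (rt n - r n)))‖
        ≤ d₄ * Δk / (2 * s) * ‖rt n - r n‖ := by
      have hstep : ‖(B n 0) ((ContinuousLinearMap.adjoint (A n 0)) (((A n 0) - A') (rt n - r n)))‖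
          ≤ (d₄ * Δk * ‖rt n - r n‖) / (2 * s) := by
        apply le_trans (aux_Ralpha α hα (A n 0) (B n 0) hBr0 _)
        rw [← hsdef]
        apply (div_le_div_iff_of_pos_right (by positivity)).mpr
        apply le_trans (ContinuousLinearMap.le_opNorm _ _)
        exact mul_le_mul_of_nonneg_right hd4 (norm_nonneg _)
      have heq : (d₄ * Δk * ‖rt n - r n‖) / (2 * s) = d₄ * Δk / (2 * s) * ‖rt n - r n‖ := by
        ring
      rw [heq] at hstep
      exact hstep
    have hkterm : ‖(B n 0) ((ContinuousLinearMap.adjoint (A n 0))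
          (F (r n, k (n + 1)) - F (r n, k n)))‖ ≤ (d₂ * Δk) / (2 * s) := by
      apply le_trans (aux_Ralpha α hα (A n 0) (B n 0) hBr0 _)
      rw [← hsdef]
      apply (div_le_div_iff_of_pos_right (by positivity)).mpr
      have h := hkLip (r n) (k n) (k (n + 1))
      rwa [hkabs] at h
    have ht1 : ‖rt (n + 1) - rt n‖ ≤ d₀ * Δk := hrtstep n hn
    have hub0 := contract 0 hJ0 (rt (n + 1)) hrtm
    have hub0' : ‖rt (n + 1) - rr n 1‖
        ≤ ‖rt (n + 1) - rt n‖
          + ‖α • (B n 0) (rt n - r n)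
             + (B n 0) ((ContinuousLinearMap.adjoint (A n 0)) (((A n 0) - A') (rt n - r n)))
             - (B n 0) ((ContinuousLinearMap.adjoint (A n 0)) Q')‖
          + ‖(B n 0) ((ContinuousLinearMap.adjoint (A n 0))
              (F (r n, k (n + 1)) - F (r n, k n)))‖ := by
      apply le_trans hub0
      rw [hvec0]
      exact norm_add₃_le
    have h9 : ‖α • (B n 0) (rt n - r n)‖ = α * ‖(B n 0) (rt n - r n)‖ := by
      rw [norm_smul, Real.norm_eq_abs, abs_of_pos hα]
    have hmid3 : ‖α • (B n 0) (rt n - r n)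
          + (B n 0) ((ContinuousLinearMap.adjoint (A n 0)) (((A n 0) - A') (rt n - r n)))
          - (B n 0) ((ContinuousLinearMap.adjoint (A n 0)) Q')‖
        ≤ α * ‖(B n 0) (rt n - r n)‖
          + ‖(B n 0) ((ContinuousLinearMap.adjoint (A n 0)) (((A n 0) - A') (rt n - r n)))‖
          + ‖(B n 0) ((ContinuousLinearMap.adjoint (A n 0)) Q')‖ := by
      apply le_trans (norm_sub_le _ _)
      have h10 := norm_add_le (α • (B n 0) (rt n - r n))
        ((B n 0) ((ContinuousLinearMap.adjoint (A n 0)) (((A n 0) - A') (rt n - r n))))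
      rw [h9] at h10
      linarith only [h10]
    have hBv0' : α * ‖(B n 0) (rt n - r n)‖
        ≤ (α / (α + σ ^ 2 - 2 * d₁ * (d₃ * ‖rt n - r n‖ + d₄ * Δk))) * ‖rt n - r n‖ := by
      calc α * ‖(B n 0) (rt n - r n)‖
          ≤ α * (‖rt n - r n‖ / (α + σ ^ 2 - 2 * d₁ * (d₃ * ‖rt n - r n‖ + d₄ * Δk))) :=
            mul_le_mul_of_nonneg_left hBv0 hα.le
      _ = (α / (α + σ ^ 2 - 2 * d₁ * (d₃ * ‖rt n - r n‖ + d₄ * Δk))) * ‖rt n - r n‖ := by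
          ring
    have hcoefmul : (α / (α + σ ^ 2 - 2 * d₁ * (d₃ * ‖rt n - r n‖ + d₄ * Δk))
          + (d₄ * Δk) / (2 * s) + (d₃ / (2 * s)) * ‖rt n - r n‖) * ‖rt n - r n‖
        ≤ b * ‖rt n - r n‖ := by
      apply mul_le_mul_of_nonneg_right _ hen0
      rw [hbdef]; exact hcoef0
    have hexpand : (α / (α + σ ^ 2 - 2 * d₁ * (d₃ * ‖rt n - r n‖ + d₄ * Δk))
          + (d₄ * Δk) / (2 * s) + (d₃ / (2 * s)) * ‖rt n - r n‖) * ‖rt n - r n‖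
        = α / (α + σ ^ 2 - 2 * d₁ * (d₃ * ‖rt n - r n‖ + d₄ * Δk)) * ‖rt n - r n‖
          + d₄ * Δk / (2 * s) * ‖rt n - r n‖
          + d₃ / (2 * s) * ‖rt n - r n‖ * ‖rt n - r n‖ := by ring
    have hgoaleq : Δk * (d₀ + d₂ / (2 * s)) = d₀ * Δk + d₂ * Δk / (2 * s) := by ring
    have step0 : ‖rt (n + 1) - rr n 1‖ ≤ b * ‖rt n - r n‖ + Δk * (d₀ + d₂ / (2 * s)) := by
      rw [hgoaleq]
      linarith only [hub0', hmid3, ht1, hBv0', hmidterm, hRQ0, hkterm, hcoefmul,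
        hexpand.le, hexpand.ge]
    have hMle : b * ‖rt n - r n‖ + Δk * (d₀ + d₂ / (2 * s)) ≤ d₀ * c₀ * α := by
      have h3 : d₀ * (Δk * (1 + d₂ / (2 * d₀ * s))) = Δk * (d₀ + d₂ / (2 * s)) := by
        field_simp
      have h4 : Δk * (d₀ + d₂ / (2 * s)) ≤ (1 - b) * (d₀ * c₀ * α) := by
        calc Δk * (d₀ + d₂ / (2 * s)) = d₀ * (Δk * (1 + d₂ / (2 * d₀ * s))) := h3.symm
        _ ≤ d₀ * ((1 - b) * c₀ * α) := mul_le_mul_of_nonneg_left hstep2 hd₀0.le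
        _ = (1 - b) * (d₀ * c₀ * α) := by ring
      have h5 := mul_le_mul_of_nonneg_left hen hb0.le
      linarith only [h4, h5]
    have inner : ∀ m, m + 1 ≤ J → ‖rt (n + 1) - rr n (m + 1)‖ ≤ d₀ * c₀ * α ∧
        ‖rt (n + 1) - rr n (m + 1)‖
          ≤ q ^ m * (b * ‖rt n - r n‖ + Δk * (d₀ + d₂ / (2 * s))) := by
      intro m
      induction m with
      | zero =>
        intro _
        refine ⟨le_trans step0 hMle, ?_⟩
        simpa using step0
      | succ m ih =>
        intro h2
        obtain ⟨ih1, ih2⟩ := ih (by omega)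
        have hs' := stepj (m + 1) (by omega) ih1
        constructor
        · calc ‖rt (n + 1) - rr n (m + 1 + 1)‖ ≤ q * ‖rt (n + 1) - rr n (m + 1)‖ := hs'
          _ ≤ 1 * (d₀ * c₀ * α) := mul_le_mul hq1.le ih1 (norm_nonneg _) zero_le_one
          _ = d₀ * c₀ * α := one_mul _
        · calc ‖rt (n + 1) - rr n (m + 1 + 1)‖ ≤ q * ‖rt (n + 1) - rr n (m + 1)‖ := hs'
          _ ≤ q * (q ^ m * (b * ‖rt n - r n‖ + Δk * (d₀ + d₂ / (2 * s)))) :=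
            mul_le_mul_of_nonneg_left ih2 hq0.le
          _ = q ^ (m + 1) * (b * ‖rt n - r n‖ + Δk * (d₀ + d₂ / (2 * s))) := by
            rw [pow_succ]; ring
    obtain ⟨m, hm⟩ : ∃ m, J = m + 1 := ⟨J - 1, by omega⟩
    have hinn := inner m (by omega)
    have hrJ' : r (n + 1) = rr n J := hrJ n hn
    have hJm : J - 1 = m := by omega
    refine ⟨by rw [hrJ']; exact hmemj J le_rfl, ?_, ?_⟩
    · rw [hJm, hrJ', hm]
      exact hinn.2
    · rw [hrJ', hm]
      exact hinn.1
  -- outer induction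
  have outer : ∀ n, n ≤ N → (r n ∈ Xs n ∧ ‖rt n - r n‖ ≤ d₀ * c₀ * α ∧
      ‖rt n - r n‖ ≤ (q ^ (J - 1) * b) ^ n * (d₀ * c₀ * α)
        + q ^ (J - 1) * (Δk * (d₀ + d₂ / (2 * s)))
          * ∑ i ∈ Finset.range n, (q ^ (J - 1) * b) ^ i) := by
    intro n
    induction n with
    | zero =>
      intro _
      refine ⟨hr0mem, hinit, ?_⟩
      simpa using hinit
    | succ n ih =>
      intro hn1
      have hn : n < N := hn1
      obtain ⟨m1, m2, m3⟩ := ih (le_of_lt hn)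
      obtain ⟨k1, k2, k3⟩ := key n hn m1 m2
      refine ⟨k1, k3, ?_⟩
      have hq' : (0:ℝ) ≤ q ^ (J - 1) * b := by positivity
      have hxqn : (0:ℝ) ≤ (q ^ (J - 1) * b) ^ n := by positivity
      have hSnn : (0:ℝ) ≤ ∑ i ∈ Finset.range n, (q ^ (J - 1) * b) ^ i :=
        Finset.sum_nonneg fun i _ => by positivity
      have hmul := mul_le_mul_of_nonneg_left m3 hq'
      have hk2' : ‖rt (n + 1) - r (n + 1)‖
          ≤ (q ^ (J - 1) * b) * ‖rt n - r n‖ + q ^ (J - 1) * (Δk * (d₀ + d₂ / (2 * s))) := by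
        have heq : q ^ (J - 1) * (b * ‖rt n - r n‖ + Δk * (d₀ + d₂ / (2 * s)))
            = (q ^ (J - 1) * b) * ‖rt n - r n‖
              + q ^ (J - 1) * (Δk * (d₀ + d₂ / (2 * s))) := by ring
        rw [heq] at k2
        exact k2
      have hgs : ∑ i ∈ Finset.range (n + 1), (q ^ (J - 1) * b) ^ i
          = (q ^ (J - 1) * b) * ∑ i ∈ Finset.range n, (q ^ (J - 1) * b) ^ i + 1 :=
        geom_sum_succ
      calc ‖rt (n + 1) - r (n + 1)‖
          ≤ (q ^ (J - 1) * b) * ‖rt n - r n‖ + q ^ (J - 1) * (Δk * (d₀ + d₂ / (2 * s))) :=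
            hk2'
      _ ≤ (q ^ (J - 1) * b) * ((q ^ (J - 1) * b) ^ n * (d₀ * c₀ * α)
            + q ^ (J - 1) * (Δk * (d₀ + d₂ / (2 * s)))
              * ∑ i ∈ Finset.range n, (q ^ (J - 1) * b) ^ i)
          + q ^ (J - 1) * (Δk * (d₀ + d₂ / (2 * s))) := by
            linarith only [hmul]
      _ = (q ^ (J - 1) * b) ^ (n + 1) * (d₀ * c₀ * α)
          + q ^ (J - 1) * (Δk * (d₀ + d₂ / (2 * s)))
            * ((q ^ (J - 1) * b) * ∑ i ∈ Finset.range n, (q ^ (J - 1) * b) ^ i + 1) := by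
            rw [pow_succ]; ring
      _ = (q ^ (J - 1) * b) ^ (n + 1) * (d₀ * c₀ * α)
          + q ^ (J - 1) * (Δk * (d₀ + d₂ / (2 * s)))
            * ∑ i ∈ Finset.range (n + 1), (q ^ (J - 1) * b) ^ i := by
            rw [hgs]
  refine ⟨fun n hn => (outer n hn).2.1, ?_⟩
  obtain ⟨-, -, hN3⟩ := outer N le_rfl
  have hxq0 : (0:ℝ) ≤ q ^ (J - 1) * b := by positivity
  have hsum : ∑ i ∈ Finset.range N, (q ^ (J - 1) * b) ^ i ≤ 1 / (1 - q ^ (J - 1) * b) := by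
    have hgm := geom_sum_mul (q ^ (J - 1) * b) N
    rw [le_div_iff₀ hden]
    nlinarith only [hgm, pow_nonneg hxq0 N]
  have hfac : (0:ℝ) ≤ q ^ (J - 1) * (Δk * (d₀ + d₂ / (2 * s))) := by positivity
  have hmul2 := mul_le_mul_of_nonneg_left hsum hfac
  have hfin : ‖rt N - r N‖ ≤ (q ^ (J - 1) * b) ^ N * (d₀ * c₀ * α)
      + q ^ (J - 1) * (Δk * (d₀ + d₂ / (2 * s))) * (1 / (1 - q ^ (J - 1) * b)) := by
    linarith only [hN3, hmul2]
  have heqf : (q ^ (J - 1) * b) ^ N * (d₀ * c₀ * α)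
      + q ^ (J - 1) * (Δk * (d₀ + d₂ / (2 * s))) * (1 / (1 - q ^ (J - 1) * b))
      = q ^ (J - 1) * Δk * (d₀ + d₂ / (2 * s)) / (1 - q ^ (J - 1) * b)
        + (q ^ (J - 1) * b) ^ N * (d₀ * c₀ * α) := by
    field_simp
    ring
  rw [heqf] at hfin
  exact hfin
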